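/- With B = A ⊗ E the tensor product of an associative algebra A with the exterior algebra E on k generators, the span of commutators of B decomposes as [B,B] = [A,A] ⊗ (E^0 ⊕ E_−) + A ⊗ E_+^{≥2}, where the two summands intersect trivially. -/
import Mathlib


open TensorProduct

/-- The exterior (Grassmann) algebra over ℂ on `k` generators. -/
abbrev ExtAlg (k : ℕ) := ExteriorAlgebra ℂ (Fin k → ℂ)

/-- The degree-`i` graded component `E^i` of the exterior algebra. -/
noncomputable def Egrade (k i : ℕ) : Submodule ℂ (ExtAlg k) :=
  LinearMap.range (ExteriorAlgebra.ι ℂ : (Fin k → ℂ) →ₗ[ℂ] ExtAlg k) ^ i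

/-- `E_− = ⊕_{i odd} E^i`. -/
noncomputable def Eodd (k : ℕ) : Submodule ℂ (ExtAlg k) := ⨆ i ∈ {i : ℕ | Odd i}, Egrade k i

/-- `E_+^{≥2} = ⊕_{i even, i ≥ 2} E^i`. -/
noncomputable def EevenGe2 (k : ℕ) : Submodule ℂ (ExtAlg k) :=
  ⨆ i ∈ {i : ℕ | Even i ∧ 2 ≤ i}, Egrade k i

/-- `E_−^{≥3} = ⊕_{i odd, i ≥ 3} E^i`. -/
noncomputable def EoddGe3 (k : ℕ) : Submodule ℂ (ExtAlg k) :=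
  ⨆ i ∈ {i : ℕ | Odd i ∧ 3 ≤ i}, Egrade k i

/-- `E_+^{≥4} = ⊕_{i even, i ≥ 4} E^i`. -/
noncomputable def EevenGe4 (k : ℕ) : Submodule ℂ (ExtAlg k) :=
  ⨆ i ∈ {i : ℕ | Even i ∧ 4 ≤ i}, Egrade k i

/-- `[X,Y]`: the ℂ-span of all commutators `[x,y] = xy − yx`, `x ∈ X`, `y ∈ Y`. -/
noncomputable def commS {B : Type*} [Ring B] [Algebra ℂ B] (X Y : Submodule ℂ B) : Submodule ℂ B :=
  Submodule.span ℂ {z | ∃ x ∈ X, ∃ y ∈ Y, z = x * y - y * x}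

/-- `U ⊗ F`: the ℂ-span of the pure tensors `u ⊗ f`, `u ∈ U`, `f ∈ F`, inside `A ⊗ E`. -/
noncomputable def tenS {A : Type*} [Ring A] [Algebra ℂ A] {k : ℕ}
    (U : Submodule ℂ A) (F : Submodule ℂ (ExtAlg k)) : Submodule ℂ (A ⊗[ℂ] ExtAlg k) :=
  Submodule.span ℂ {z | ∃ u ∈ U, ∃ f ∈ F, z = u ⊗ₜ[ℂ] f}

namespace St14
variable {k : ℕ}

variable {k : ℕ}

lemma mem_Egrade_iff {i : ℕ} {x : ExtAlg k} :
    x ∈ Egrade k i ↔ x ∈ (LinearMap.range (ExteriorAlgebra.ι ℂ : (Fin k → ℂ) →ₗ[ℂ] ExtAlg k)) ^ i :=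
  Iff.rfl

lemma ι_swap (v w : Fin k → ℂ) :
    ExteriorAlgebra.ι ℂ w * ExteriorAlgebra.ι ℂ v
      = -(ExteriorAlgebra.ι ℂ v * ExteriorAlgebra.ι ℂ w) := by
  exact eq_neg_of_add_eq_zero_right (ExteriorAlgebra.ι_add_mul_swap (R := ℂ) v w)

lemma superA {j : ℕ} {f : ExtAlg k} (hf : f ∈ Egrade k j) (v : Fin k → ℂ) :
    f * ExteriorAlgebra.ι ℂ v = ((-1 : ℂ)) ^ j • (ExteriorAlgebra.ι ℂ v * f) := by
  rw [mem_Egrade_iff] at hf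
  induction hf using Submodule.pow_induction_on_left' with
  | algebraMap r => simp [Algebra.commutes]
  | add x y i hx hy ihx ihy => simp only [add_mul, mul_add, ihx, ihy, smul_add]
  | mem_mul m hm i x hx ih =>
    obtain ⟨w, rfl⟩ := hm
    calc ExteriorAlgebra.ι ℂ w * x * ExteriorAlgebra.ι ℂ v
        = ExteriorAlgebra.ι ℂ w * ((-1 : ℂ) ^ i • (ExteriorAlgebra.ι ℂ v * x)) := by
          rw [mul_assoc, ih]
      _ = (-1 : ℂ) ^ i • (ExteriorAlgebra.ι ℂ w * ExteriorAlgebra.ι ℂ v * x) := by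
          rw [mul_smul_comm, mul_assoc]
      _ = (-1 : ℂ) ^ (i + 1) • (ExteriorAlgebra.ι ℂ v * (ExteriorAlgebra.ι ℂ w * x)) := by
          rw [ι_swap, pow_succ]
          simp [mul_assoc, neg_mul, mul_neg, smul_neg, neg_smul]

lemma superB {i j : ℕ} {e f : ExtAlg k} (he : e ∈ Egrade k i) (hf : f ∈ Egrade k j) :
    f * e = ((-1 : ℂ)) ^ (i * j) • (e * f) := by
  rw [mem_Egrade_iff] at he
  induction he using Submodule.pow_induction_on_left' with
  | algebraMap r => simp [Algebra.commutes]
  | add x y n hx hy ihx ihy => simp only [mul_add, add_mul, ihx, ihy, smul_add]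
  | mem_mul m hm n x hx ih =>
    obtain ⟨w, rfl⟩ := hm
    have harith : j + n * j = (n + 1) * j := by ring
    calc f * (ExteriorAlgebra.ι ℂ w * x)
        = f * ExteriorAlgebra.ι ℂ w * x := by rw [mul_assoc]
      _ = ((-1 : ℂ) ^ j • (ExteriorAlgebra.ι ℂ w * f)) * x := by rw [superA hf w]
      _ = (-1 : ℂ) ^ j • (ExteriorAlgebra.ι ℂ w * (f * x)) := by
          rw [smul_mul_assoc, mul_assoc]
      _ = (-1 : ℂ) ^ j • (ExteriorAlgebra.ι ℂ w * ((-1 : ℂ) ^ (n * j) • (x * f))) := by rw [ih]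
      _ = (-1 : ℂ) ^ ((n + 1) * j) • (ExteriorAlgebra.ι ℂ w * x * f) := by
          rw [mul_smul_comm, smul_smul, ← pow_add, harith, mul_assoc]


variable {k : ℕ}

variable {A : Type*} [Ring A] [Algebra ℂ A]

lemma mem_tenS {U : Submodule ℂ A} {F : Submodule ℂ (ExtAlg k)} {u : A} {f : ExtAlg k}
    (hu : u ∈ U) (hf : f ∈ F) : u ⊗ₜ[ℂ] f ∈ tenS U F :=
  Submodule.subset_span ⟨u, hu, f, hf, rfl⟩

lemma mul_mem_Egrade {i j : ℕ} {e f : ExtAlg k} (he : e ∈ Egrade k i) (hf : f ∈ Egrade k j) :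
    e * f ∈ Egrade k (i + j) := by
  rw [mem_Egrade_iff, pow_add]
  exact Submodule.mul_mem_mul he hf

lemma Egrade_le_Eodd {i : ℕ} (hi : Odd i) : Egrade k i ≤ Eodd k :=
  le_iSup₂ (f := fun i (_ : i ∈ {i : ℕ | Odd i}) => Egrade k i) i hi

lemma Egrade_le_EevenGe2 {i : ℕ} (hi : Even i ∧ 2 ≤ i) : Egrade k i ≤ EevenGe2 k :=
  le_iSup₂ (f := fun i (_ : i ∈ {i : ℕ | Even i ∧ 2 ≤ i}) => Egrade k i) i hi

/-- The right-hand side submodule. -/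
noncomputable def RHS (A : Type*) [Ring A] [Algebra ℂ A] (k : ℕ) :
    Submodule ℂ (A ⊗[ℂ] ExtAlg k) :=
  tenS (commS (⊤ : Submodule ℂ A) ⊤) (Egrade k 0 ⊔ Eodd k) + tenS ⊤ (EevenGe2 k)

lemma comm_pure_mem {i j : ℕ} (a b : A) {e f : ExtAlg k}
    (he : e ∈ Egrade k i) (hf : f ∈ Egrade k j) :
    (a ⊗ₜ[ℂ] e) * (b ⊗ₜ[ℂ] f) - (b ⊗ₜ[ℂ] f) * (a ⊗ₜ[ℂ] e) ∈ RHS A k := by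
  have hg : e * f ∈ Egrade k (i + j) := mul_mem_Egrade he hf
  rw [Algebra.TensorProduct.tmul_mul_tmul, Algebra.TensorProduct.tmul_mul_tmul,
    superB he hf, tmul_smul, smul_tmul', ← sub_tmul]
  by_cases hc : Even (i + j) ∧ 2 ≤ i + j
  · exact Submodule.mem_sup_right (mem_tenS trivial (Egrade_le_EevenGe2 hc hg))
  · have hij : Even (i * j) := by
      by_contra h
      rw [Nat.not_even_iff_odd, Nat.odd_mul] at h
      have h1 := h.1.pos
      have h2 := h.2.pos
      exact hc ⟨h.1.add_odd h.2, by omega⟩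
    rw [hij.neg_one_pow, one_smul]
    have hmem : e * f ∈ Egrade k 0 ⊔ Eodd k := by
      rcases Nat.even_or_odd (i + j) with hev | hod
      · have : i + j = 0 := by
          by_contra h0
          obtain ⟨m, hm⟩ := hev
          exact hc ⟨⟨m, hm⟩, by omega⟩
        rw [this] at hg
        exact Submodule.mem_sup_left hg
      · exact Submodule.mem_sup_right (Egrade_le_Eodd hod hg)
    exact Submodule.mem_sup_left
      (mem_tenS (Submodule.subset_span ⟨a, trivial, b, trivial, rfl⟩) hmem)

lemma comm_sum_mem {B : Type*} [Ring B] [Algebra ℂ B] {S : Submodule ℂ B}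
    {ι₁ ι₂ : Type*} {s : Finset ι₁} {t : Finset ι₂} {x : ι₁ → B} {y : ι₂ → B}
    (h : ∀ i ∈ s, ∀ j ∈ t, x i * y j - y j * x i ∈ S) :
    (∑ i ∈ s, x i) * (∑ j ∈ t, y j) - (∑ j ∈ t, y j) * (∑ i ∈ s, x i) ∈ S := by
  rw [Finset.sum_mul_sum, Finset.sum_mul_sum, Finset.sum_comm (s := t) (t := s),
    ← Finset.sum_sub_distrib]
  refine Submodule.sum_mem _ fun i hi => ?_
  rw [← Finset.sum_sub_distrib]
  exact Submodule.sum_mem _ fun j hj => h i hi j hj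

lemma comm_mem_RHS (x y : A ⊗[ℂ] ExtAlg k) : x * y - y * x ∈ RHS A k := by
  have key : ∀ (a b : A) (e f : ExtAlg k),
      (a ⊗ₜ[ℂ] e) * (b ⊗ₜ[ℂ] f) - (b ⊗ₜ[ℂ] f) * (a ⊗ₜ[ℂ] e) ∈ RHS A k := by
    intro a b e f
    classical
    have he := (DirectSum.sum_support_decompose (fun i : ℕ => ⋀[ℂ]^i (Fin k → ℂ)) e).symm
    have hf := (DirectSum.sum_support_decompose (fun i : ℕ => ⋀[ℂ]^i (Fin k → ℂ)) f).symm
    rw [he, hf, tmul_sum, tmul_sum]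
    refine comm_sum_mem fun i _ j _ => ?_
    exact comm_pure_mem a b (SetLike.coe_mem _) (SetLike.coe_mem _)
  induction x using TensorProduct.induction_on with
  | zero => simpa using Submodule.zero_mem _
  | add x₁ x₂ h1 h2 =>
    have : (x₁ + x₂) * y - y * (x₁ + x₂) = (x₁ * y - y * x₁) + (x₂ * y - y * x₂) := by
      noncomm_ring
    rw [this]; exact add_mem h1 h2
  | tmul a e =>
    induction y using TensorProduct.induction_on with
    | zero => simpa using Submodule.zero_mem _
    | add y₁ y₂ h1 h2 =>
      have : (a ⊗ₜ[ℂ] e) * (y₁ + y₂) - (y₁ + y₂) * (a ⊗ₜ[ℂ] e)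
          = ((a ⊗ₜ[ℂ] e) * y₁ - y₁ * (a ⊗ₜ[ℂ] e)) + ((a ⊗ₜ[ℂ] e) * y₂ - y₂ * (a ⊗ₜ[ℂ] e)) := by
        noncomm_ring
      rw [this]; exact add_mem h1 h2
    | tmul b f => exact key a b e f


variable {k : ℕ}


lemma tenS_comm_le (F : Submodule ℂ (ExtAlg k)) :
    tenS (commS (⊤ : Submodule ℂ A) ⊤) F ≤ commS (⊤ : Submodule ℂ (A ⊗[ℂ] ExtAlg k)) ⊤ := by
  rw [tenS, Submodule.span_le]
  rintro z ⟨u, hu, f, hf, rfl⟩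
  clear hf
  induction hu using Submodule.span_induction with
  | mem x hx =>
    obtain ⟨a, -, b, -, rfl⟩ := hx
    have h : (a * b - b * a) ⊗ₜ[ℂ] f
        = (a ⊗ₜ[ℂ] f) * (b ⊗ₜ[ℂ] (1 : ExtAlg k)) - (b ⊗ₜ[ℂ] (1 : ExtAlg k)) * (a ⊗ₜ[ℂ] f) := by
      simp [Algebra.TensorProduct.tmul_mul_tmul, sub_tmul]
    rw [SetLike.mem_coe, h]
    exact Submodule.subset_span ⟨_, Submodule.mem_top, _, Submodule.mem_top, rfl⟩
  | zero => rw [SetLike.mem_coe, zero_tmul]; exact Submodule.zero_mem _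
  | add x y hx hy ihx ihy =>
    rw [SetLike.mem_coe, add_tmul]; exact add_mem ihx ihy
  | smul c x hx ihx =>
    rw [SetLike.mem_coe, ← smul_tmul']; exact Submodule.smul_mem _ _ ihx

lemma tenS_even_le :
    tenS (⊤ : Submodule ℂ A) (EevenGe2 k) ≤ commS (⊤ : Submodule ℂ (A ⊗[ℂ] ExtAlg k)) ⊤ := by
  rw [tenS, Submodule.span_le]
  rintro z ⟨a, -, f, hf, rfl⟩
  have key : EevenGe2 k ≤
      Submodule.comap (TensorProduct.mk ℂ A (ExtAlg k) a)
        (commS (⊤ : Submodule ℂ (A ⊗[ℂ] ExtAlg k)) ⊤) := by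
    refine iSup₂_le fun i hi => ?_
    obtain ⟨hie, hi2⟩ := hi
    obtain ⟨n, rfl⟩ : ∃ n, i = n + 1 := ⟨i - 1, by omega⟩
    have hodd : Odd n := by
      rcases hie with ⟨m, hm⟩; exact ⟨m - 1, by omega⟩
    intro x hx
    simp only [Submodule.mem_comap, TensorProduct.mk_apply]
    rw [mem_Egrade_iff, pow_succ'] at hx
    refine Submodule.mul_induction_on hx ?_ (fun u v hu hv => ?_)
    · rintro m ⟨v, rfl⟩ p hp
      have hswap : p * ExteriorAlgebra.ι ℂ v = -(ExteriorAlgebra.ι ℂ v * p) := by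
        rw [superA hp v, hodd.neg_one_pow, neg_one_smul]
      have hc : (a ⊗ₜ[ℂ] ExteriorAlgebra.ι ℂ v) * ((1 : A) ⊗ₜ[ℂ] p)
            - ((1 : A) ⊗ₜ[ℂ] p) * (a ⊗ₜ[ℂ] ExteriorAlgebra.ι ℂ v)
          = (2 : ℂ) • (a ⊗ₜ[ℂ] (ExteriorAlgebra.ι ℂ v * p)) := by
        rw [Algebra.TensorProduct.tmul_mul_tmul, Algebra.TensorProduct.tmul_mul_tmul,
          one_mul, mul_one, hswap, tmul_neg, sub_neg_eq_add, two_smul]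
      have heq : a ⊗ₜ[ℂ] (ExteriorAlgebra.ι ℂ v * p)
          = (2⁻¹ : ℂ) • ((a ⊗ₜ[ℂ] ExteriorAlgebra.ι ℂ v) * ((1 : A) ⊗ₜ[ℂ] p)
            - ((1 : A) ⊗ₜ[ℂ] p) * (a ⊗ₜ[ℂ] ExteriorAlgebra.ι ℂ v)) := by
        rw [hc, smul_smul]; norm_num
      rw [heq]
      exact Submodule.smul_mem _ _
        (Submodule.subset_span ⟨_, Submodule.mem_top, _, Submodule.mem_top, rfl⟩)
    · rw [tmul_add]; exact add_mem hu hv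
  exact key hf

noncomputable def piE (k : ℕ) : ExtAlg k →ₗ[ℂ] ExtAlg k :=
  (DirectSum.toModule ℂ ℕ (ExtAlg k) fun i =>
      if Even i ∧ 2 ≤ i then Submodule.subtype (⋀[ℂ]^i (Fin k → ℂ)) else 0) ∘ₗ
    (DirectSum.decomposeLinearEquiv fun i : ℕ => ⋀[ℂ]^i (Fin k → ℂ)).toLinearMap

lemma piE_of_mem {i : ℕ} {x : ExtAlg k} (hx : x ∈ Egrade k i) :
    piE k x = if Even i ∧ 2 ≤ i then x else 0 := by
  have hx' : x ∈ ⋀[ℂ]^i (Fin k → ℂ) := hx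
  rw [piE, LinearMap.comp_apply, LinearEquiv.coe_toLinearMap,
    DirectSum.decomposeLinearEquiv_apply, DirectSum.decompose_of_mem (fun i : ℕ => ⋀[ℂ]^i (Fin k → ℂ)) hx',
    ← DirectSum.lof_eq_of ℂ, DirectSum.toModule_lof,
    apply_ite (fun F : (⋀[ℂ]^i (Fin k → ℂ)) →ₗ[ℂ] ExtAlg k => F ⟨x, hx'⟩)]
  split_ifs <;> simp

lemma piE_zero_on {x : ExtAlg k} (hx : x ∈ Egrade k 0 ⊔ Eodd k) : piE k x = 0 := by
  have h : Egrade k 0 ⊔ Eodd k ≤ LinearMap.ker (piE k) := by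
    refine sup_le (fun y hy => ?_) (iSup₂_le fun i hi y hy => ?_)
    · rw [LinearMap.mem_ker, piE_of_mem hy, if_neg (by simp)]
    · rw [LinearMap.mem_ker, piE_of_mem hy, if_neg]
      exact fun hcon => (Nat.not_even_iff_odd.mpr hi) hcon.1
  exact h hx

lemma piE_id_on {x : ExtAlg k} (hx : x ∈ EevenGe2 k) : piE k x = x := by
  have h : EevenGe2 k ≤ LinearMap.ker (piE k - LinearMap.id) := by
    refine iSup₂_le fun i hi y hy => ?_
    rw [LinearMap.mem_ker, LinearMap.sub_apply, LinearMap.id_apply, sub_eq_zero,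
      piE_of_mem hy, if_pos (show Even i ∧ 2 ≤ i from hi)]
  have := h hx
  rwa [LinearMap.mem_ker, LinearMap.sub_apply, LinearMap.id_apply, sub_eq_zero] at this

lemma inter_bot :
    tenS (commS (⊤ : Submodule ℂ A) ⊤) (Egrade k 0 ⊔ Eodd k)
      ⊓ tenS (⊤ : Submodule ℂ A) (EevenGe2 k) = ⊥ := by
  rw [eq_bot_iff]
  set L := LinearMap.lTensor A (piE k) with hL
  have h1 : tenS (commS (⊤ : Submodule ℂ A) ⊤) (Egrade k 0 ⊔ Eodd k) ≤ LinearMap.ker L := by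
    rw [tenS, Submodule.span_le]
    rintro z ⟨u, -, f, hf, rfl⟩
    rw [SetLike.mem_coe, LinearMap.mem_ker, hL, LinearMap.lTensor_tmul, piE_zero_on hf,
      tmul_zero]
  have h2 : tenS (⊤ : Submodule ℂ A) (EevenGe2 k) ≤ LinearMap.ker (L - LinearMap.id) := by
    rw [tenS, Submodule.span_le]
    rintro z ⟨u, -, f, hf, rfl⟩
    rw [SetLike.mem_coe, LinearMap.mem_ker, LinearMap.sub_apply, LinearMap.id_apply,
      sub_eq_zero, hL, LinearMap.lTensor_tmul, piE_id_on hf]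
  rintro z ⟨hz1, hz2⟩
  have e2 := h2 hz2
  rw [LinearMap.mem_ker, LinearMap.sub_apply, LinearMap.id_apply, sub_eq_zero] at e2
  have e1 := h1 hz1
  rw [LinearMap.mem_ker] at e1
  simpa [Submodule.mem_bot] using e2.symm.trans e1


end St14

/-- with `B = A ⊗ E`,
`[B,B] = [A,A] ⊗ (E^0 ⊕ E_−) + A ⊗ E_+^{≥2}`, and the two summands intersect trivially. -/
theorem stmt_14 (A : Type*) [Ring A] [Algebra ℂ A] (k : ℕ) :
    commS (⊤ : Submodule ℂ (A ⊗[ℂ] ExtAlg k)) ⊤ =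
        tenS (commS (⊤ : Submodule ℂ A) ⊤) (Egrade k 0 ⊔ Eodd k)
        + tenS (⊤ : Submodule ℂ A) (EevenGe2 k)
      ∧ tenS (commS (⊤ : Submodule ℂ A) ⊤) (Egrade k 0 ⊔ Eodd k)
        ⊓ tenS (⊤ : Submodule ℂ A) (EevenGe2 k) = ⊥ := by
  constructor
  · refine le_antisymm ?_ (sup_le (St14.tenS_comm_le _) St14.tenS_even_le)
    rw [commS, Submodule.span_le]
    rintro z ⟨x, -, y, -, rfl⟩
    exact St14.comm_mem_RHS x y
  · exact St14.inter_bot
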